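/- Let (L_{k,j})_{k≥1, j≥1} be a doubly indexed family of independent, identically distributed nonnegative real random variables with common cumulative distribution function F, and let F^{(−1)}(q) := inf{t ∈ ℝ : F(t) ≥ q}. Let (a_k)_{k≥1} be positive integers tending to infinity such that for some c > 1 and all sufficiently large k one has a_k ≥ c·a_{k−1}. Then ∑_{k=1}^∞ min_{1≤j≤a_k} L_{k,j} < ∞ almost surely if and only if ∑_{k=1}^∞ F^{(−1)}(1/a_k) < ∞. -/

import Mathlib

open MeasureTheory ProbabilityTheory Filter

private lemma aux_exp_le_one_sub {x : ℝ} (h0 : 0 ≤ x) (h2 : x ≤ 1/2) :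
    Real.exp (-(2*x)) ≤ 1 - x := by
  have h1 : (0:ℝ) < 1 + 2*x := by linarith
  have he : 1 + 2*x ≤ Real.exp (2*x) := by linarith [Real.add_one_le_exp (2*x)]
  have hexp : Real.exp (-(2*x)) * Real.exp (2*x) = 1 := by
    rw [← Real.exp_add]; simp
  have hpos : (0:ℝ) < Real.exp (-(2*x)) := Real.exp_pos _
  nlinarith [mul_le_mul_of_nonneg_left he hpos.le, h0, h2, h1, hpos]

private lemma aux_sum_half (f : ℕ → ℝ) (N : ℕ) : ∀ s : ℕ,
    ∑ d ∈ Finset.range (2*s), f (N + d/2) = 2 * ∑ j ∈ Finset.range s, f (N + j) := by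
  intro s
  induction s with
  | zero => simp
  | succ s ih =>
    have h2 : 2*(s+1) = (2*s) + 1 + 1 := by ring
    rw [h2, Finset.sum_range_succ, Finset.sum_range_succ, ih, Finset.sum_range_succ]
    have e1 : (2*s)/2 = s := by omega
    have e2 : (2*s+1)/2 = s := by omega
    rw [e1, e2]; ring

private lemma aux_summable_half {f : ℕ → ℝ} (hf0 : ∀ n, 0 ≤ f n) (hf : Summable f) (N : ℕ) :
    Summable (fun k => f (N + (k - N)/2)) := by
  have hshift : Summable (fun j => f (N + j)) :=
    ((summable_nat_add_iff N).2 hf).congr (fun j => by rw [add_comm])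
  have ht0 : 0 ≤ ∑' j, f (N + j) := tsum_nonneg fun j => hf0 _
  apply summable_of_sum_range_le (c := N * f N + 2 * ∑' j, f (N + j)) (fun n => hf0 _)
  intro n
  rcases le_or_gt n N with h | h
  · have hcong : ∀ k ∈ Finset.range n, f (N + (k - N)/2) = f N := by
      intro k hk
      have hkn := Finset.mem_range.1 hk
      have he : N + (k - N)/2 = N := by omega
      rw [he]
    rw [Finset.sum_congr rfl hcong, Finset.sum_const, Finset.card_range, nsmul_eq_mul]
    have hn : (n:ℝ) ≤ N := by exact_mod_cast h
    nlinarith [hf0 N, ht0]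
  · rw [← Finset.sum_range_add_sum_Ico _ h.le]
    have hA : ∑ k ∈ Finset.range N, f (N + (k - N)/2) = N * f N := by
      have hcong : ∀ k ∈ Finset.range N, f (N + (k - N)/2) = f N := by
        intro k hk
        have hkn := Finset.mem_range.1 hk
        have he : N + (k - N)/2 = N := by omega
        rw [he]
      rw [Finset.sum_congr rfl hcong, Finset.sum_const, Finset.card_range, nsmul_eq_mul]
    have hB : ∑ k ∈ Finset.Ico N n, f (N + (k - N)/2) ≤ 2 * ∑' j, f (N + j) := by
      rw [Finset.sum_Ico_eq_sum_range]
      have hcongr : ∀ d ∈ Finset.range (n - N), f (N + (N + d - N)/2) = f (N + d/2) := by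
        intro d _
        have he : N + (N + d - N)/2 = N + d/2 := by omega
        rw [he]
      rw [Finset.sum_congr rfl hcongr]
      have hle : n - N ≤ 2*(((n - N) + 1)/2) := by omega
      calc ∑ d ∈ Finset.range (n - N), f (N + d/2)
          ≤ ∑ d ∈ Finset.range (2*(((n - N) + 1)/2)), f (N + d/2) :=
            Finset.sum_le_sum_of_subset_of_nonneg (Finset.range_subset_range.2 hle)
              (fun d _ _ => hf0 _)
        _ = 2 * ∑ j ∈ Finset.range (((n - N) + 1)/2), f (N + j) := aux_sum_half f N _
        _ ≤ 2 * ∑' j, f (N + j) := by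
            have := Summable.sum_le_tsum (Finset.range (((n - N) + 1)/2)) (fun j _ => hf0 _) hshift
            linarith
    linarith [hA, hB]

/-- **Lemma 5.4 (min-summability criterion).** For i.i.d. nonnegative random
variables `(L_{k,j})` with common law `ν` (CDF `F(t) = ν(-∞,t]`), and positive
integers `a_k → ∞` with `a_{k+1} ≥ c a_k` eventually for some `c > 1`,
`∑_k min_{1 ≤ j ≤ a_k} L_{k,j} < ∞` a.s. iff `∑_k F^{(-1)}(1/a_k) < ∞`. -/
theorem stmt1 {Ω : Type*} [MeasurableSpace Ω] (μ : Measure Ω) [IsProbabilityMeasure μ]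
    (L : ℕ → ℕ → Ω → ℝ) (hmeas : ∀ k j, Measurable (L k j))
    (hnonneg : ∀ k j ω, 0 ≤ L k j ω)
    (hindep : iIndepFun (fun p : ℕ × ℕ => L p.1 p.2) μ)
    (ν : Measure ℝ) [IsProbabilityMeasure ν]
    (hid : ∀ k j, Measure.map (L k j) μ = ν)
    (a : ℕ → ℕ) (hapos : ∀ k, 0 < a k)
    (hatop : Tendsto a atTop atTop)
    (c : ℝ) (hc : 1 < c)
    (hgrow : ∀ᶠ k in atTop, c * (a k : ℝ) ≤ (a (k + 1) : ℝ)) :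
    (∀ᵐ ω ∂μ, Summable (fun k : ℕ =>
        (Finset.Icc 1 (a k)).inf' (Finset.nonempty_Icc.mpr (hapos k))
          (fun j => L k j ω))) ↔
      Summable (fun k : ℕ =>
        sInf {t : ℝ | (1 : ℝ) / (a k : ℝ) ≤ (ν (Set.Iic t)).toReal}) := by
  classical
  set b : ℕ → ℝ := fun k =>
    sInf {t : ℝ | (1 : ℝ) / (a k : ℝ) ≤ (ν (Set.Iic t)).toReal} with hbdef
  -- basic facts about the cdf
  have hsetcdf : ∀ k : ℕ, {t : ℝ | (1 : ℝ) / (a k : ℝ) ≤ (ν (Set.Iic t)).toReal}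
      = {t : ℝ | (1 : ℝ) / (a k : ℝ) ≤ cdf ν t} := by
    intro k; ext t; simp [cdf_eq_real, measureReal_def]
  have hIic0 : ∀ t : ℝ, t < 0 → cdf ν t = 0 := by
    intro t ht
    rw [cdf_eq_real, measureReal_def, ← hid 0 0, Measure.map_apply (hmeas 0 0) measurableSet_Iic]
    have : L 0 0 ⁻¹' Set.Iic t = ∅ := by
      ext ω; simp only [Set.mem_preimage, Set.mem_Iic, Set.mem_empty_iff_false, iff_false,
        not_le]
      exact lt_of_lt_of_le ht (hnonneg 0 0 ω)
    rw [this]; simp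
  have hak_pos : ∀ k, (0:ℝ) < 1 / (a k : ℝ) :=
    fun k => one_div_pos.2 (by exact_mod_cast hapos k)
  have hlb : ∀ k : ℕ, ∀ t ∈ {t : ℝ | (1 : ℝ) / (a k : ℝ) ≤ cdf ν t}, (0:ℝ) ≤ t := by
    intro k t ht
    by_contra hlt; push_neg at hlt
    rw [Set.mem_setOf_eq, hIic0 t hlt] at ht
    linarith [hak_pos k]
  have hbddS : ∀ k : ℕ, BddBelow {t : ℝ | (1 : ℝ) / (a k : ℝ) ≤ cdf ν t} :=
    fun k => ⟨0, fun t ht => hlb k t ht⟩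
  have hbeq : ∀ k, b k = sInf {t : ℝ | (1 : ℝ) / (a k : ℝ) ≤ cdf ν t} := by
    intro k
    have h1 : b k = sInf {t : ℝ | (1 : ℝ) / (a k : ℝ) ≤ (ν (Set.Iic t)).toReal} := rfl
    rw [h1, hsetcdf k]
  have hb0 : ∀ k, 0 ≤ b k := by
    intro k; rw [hbeq k]; exact Real.sInf_nonneg (hlb k)
  have hlt : ∀ k : ℕ, ∀ t : ℝ, t < b k → cdf ν t < 1 / (a k : ℝ) := by
    intro k t ht
    by_contra hge; push_neg at hge
    have hmem : t ∈ {t : ℝ | (1 : ℝ) / (a k : ℝ) ≤ cdf ν t} := hge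
    have := csInf_le (hbddS k) hmem
    rw [← hbeq k] at this
    linarith
  have hFb : ∀ k : ℕ, 2 ≤ a k → 1 / (a k : ℝ) ≤ cdf ν (b k) := by
    intro k hk2
    have h12 : 1/(a k:ℝ) ≤ 1/2 :=
      one_div_le_one_div_of_le (by norm_num) (by exact_mod_cast hk2)
    have hSne : {t : ℝ | (1 : ℝ) / (a k : ℝ) ≤ cdf ν t}.Nonempty := by
      have hev := (tendsto_cdf_atTop ν).eventually (eventually_ge_nhds
        (by norm_num : (1:ℝ)/2 < 1))
      obtain ⟨t, ht⟩ := hev.exists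
      exact ⟨t, le_trans h12 ht⟩
    have hub : ∀ u, b k < u → 1/(a k:ℝ) ≤ cdf ν u := by
      intro u hu
      rw [hbeq k] at hu
      obtain ⟨s, hs, hsu⟩ := (csInf_lt_iff (hbddS k) hSne).1 hu
      exact le_trans hs ((monotone_cdf ν) hsu.le)
    have hrc : Tendsto (cdf ν) (nhdsWithin (b k) (Set.Ioi (b k))) (nhds (cdf ν (b k))) :=
      ((cdf ν).right_continuous (b k)).tendsto.mono_left
        (nhdsWithin_mono _ Set.Ioi_subset_Ici_self)
    exact ge_of_tendsto hrc (eventually_nhdsWithin_of_forall fun u hu => hub u hu)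
  -- the events
  set A : ℕ → ℝ → Set Ω := fun k t => ⋂ j ∈ Finset.Icc 1 (a k), L k j ⁻¹' Set.Ioi t
    with hAdef
  have hAm : ∀ k t, MeasurableSet (A k t) := by
    intro k t; rw [hAdef]
    exact Finset.measurableSet_biInter _ fun j _ => (hmeas k j) measurableSet_Ioi
  have hAiff : ∀ (k : ℕ) (t : ℝ) (ω : Ω), ω ∈ A k t ↔
      t < (Finset.Icc 1 (a k)).inf' (Finset.nonempty_Icc.mpr (hapos k))
        (fun j => L k j ω) := by
    intro k t ω
    rw [hAdef]
    simp only [Set.mem_iInter, Set.mem_preimage, Set.mem_Ioi, Finset.lt_inf'_iff]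
  have hMnn : ∀ (k : ℕ) (ω : Ω), 0 ≤ (Finset.Icc 1 (a k)).inf'
      (Finset.nonempty_Icc.mpr (hapos k)) (fun j => L k j ω) :=
    fun k ω => Finset.le_inf' _ _ fun j _ => hnonneg k j ω
  -- single-row measure computation
  have hL_map : ∀ (k j : ℕ) (t : ℝ), μ (L k j ⁻¹' Set.Ioi t) = ν (Set.Ioi t) := by
    intro k j t
    rw [← hid k j, Measure.map_apply (hmeas k j) measurableSet_Ioi]
  have hrowInter : ∀ (k : ℕ) (t : ℝ),
      (⋂ p ∈ ({k} ×ˢ Finset.Icc 1 (a k)), L p.1 p.2 ⁻¹' Set.Ioi t) = A k t := by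
    intro k t
    rw [hAdef]
    ext ω
    simp only [Set.mem_iInter, Set.mem_preimage, Set.mem_Ioi, Finset.mem_product,
      Finset.mem_singleton]
    constructor
    · intro h j hj; exact h (k, j) ⟨rfl, hj⟩
    · rintro h p ⟨h1, h2⟩
      have := h p.2 h2
      rw [h1]; exact this
  have hrow : ∀ (k : ℕ) (t : ℝ), μ (A k t) = ν (Set.Ioi t) ^ (a k) := by
    intro k t
    rw [← hrowInter k t,
      hindep.meas_biInter (fun p _ => ⟨Set.Ioi t, measurableSet_Ioi, rfl⟩),
      Finset.prod_congr rfl (fun p _ => hL_map p.1 p.2 t), Finset.prod_const]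
    congr 1
    simp [Finset.card_product, Nat.card_Icc]
  have hIoiR : ∀ t : ℝ, (ν (Set.Ioi t)).toReal = 1 - cdf ν t := by
    intro t
    rw [← Set.compl_Iic, prob_compl_eq_one_sub measurableSet_Iic,
      ENNReal.toReal_sub_of_le prob_le_one ENNReal.one_ne_top, ENNReal.toReal_one,
      cdf_eq_real, measureReal_def]
  have hμA : ∀ (k : ℕ) (t : ℝ), (μ (A k t)).toReal = (1 - cdf ν t) ^ (a k) := by
    intro k t
    rw [hrow k t, ENNReal.toReal_pow, hIoiR t]
  have hup : ∀ (k : ℕ) (t : ℝ),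
      (μ (A k t)).toReal ≤ Real.exp (-((a k : ℝ) * cdf ν t)) := by
    intro k t
    rw [hμA]
    calc (1 - cdf ν t) ^ (a k)
        ≤ Real.exp (-(cdf ν t)) ^ (a k) := by
          apply pow_le_pow_left₀ (by linarith [cdf_le_one ν t])
          linarith [Real.add_one_le_exp (-(cdf ν t))]
      _ = Real.exp (-((a k : ℝ) * cdf ν t)) := by
          rw [← Real.exp_nat_mul]; congr 1; ring
  have hlow : ∀ (k : ℕ) (t : ℝ), 0 ≤ cdf ν t → cdf ν t ≤ 1/2 →
      Real.exp (-(2 * ((a k : ℝ) * cdf ν t))) ≤ (μ (A k t)).toReal := by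
    intro k t h0 h2
    rw [hμA]
    calc Real.exp (-(2 * ((a k : ℝ) * cdf ν t)))
        = Real.exp (-(2 * cdf ν t)) ^ (a k) := by
          rw [← Real.exp_nat_mul]; congr 1; ring
      _ ≤ (1 - cdf ν t) ^ (a k) :=
          pow_le_pow_left₀ (Real.exp_nonneg _) (aux_exp_le_one_sub h0 h2) _
  -- choose the threshold N
  obtain ⟨N₀, hN₀⟩ := eventually_atTop.1 hgrow
  obtain ⟨N₁, hN₁⟩ := eventually_atTop.1 (hatop.eventually_ge_atTop 2)
  set N := max N₀ N₁ with hNdef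
  have hNgrow : ∀ k, N ≤ k → c * (a k : ℝ) ≤ (a (k+1) : ℝ) :=
    fun k hk => hN₀ k (le_trans (le_max_left _ _) hk)
  have hN2 : ∀ k, N ≤ k → 2 ≤ a k := fun k hk => hN₁ k (le_trans (le_max_right _ _) hk)
  have hgpow : ∀ m, N ≤ m → ∀ k, m ≤ k → (a m : ℝ) * c ^ (k - m) ≤ (a k : ℝ) := by
    intro m hm k hk
    induction k, hk using Nat.le_induction with
    | base => simp
    | succ k hmk ih =>
        have hgw : c * (a k : ℝ) ≤ (a (k+1) : ℝ) := hNgrow k (le_trans hm hmk)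
        have he : k + 1 - m = (k - m) + 1 := by omega
        rw [he, pow_succ, ← mul_assoc]
        calc (a m : ℝ) * c ^ (k - m) * c ≤ (a k : ℝ) * c :=
              mul_le_mul_of_nonneg_right ih (by linarith)
          _ ≤ (a (k+1) : ℝ) := by linarith
  constructor
  · -- a.s. summable → Summable b
    intro hAE
    by_contra hnsum
    -- the lower-bound machinery
    set β : ℕ → ℝ := fun k => min (b k / 2) 1 with hβdef
    have hβ0 : ∀ k, 0 ≤ β k := fun k => le_min (by linarith [hb0 k]) zero_le_one
    have hβ1 : ∀ k, β k ≤ 1 := fun k => min_le_right _ _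
    have hβb : ∀ k, β k ≤ b k / 2 := fun k => min_le_left _ _
    have hβns : ¬ Summable β := by
      intro hs
      apply hnsum
      have h0 := hs.tendsto_atTop_zero
      have hev : ∀ᶠ k in atTop, b k = 2 * β k := by
        filter_upwards [h0.eventually (eventually_lt_nhds one_pos)] with k hk
        have hk' : β k < 1 := hk
        have hmin : β k = b k / 2 := by
          rcases le_or_gt (b k / 2) 1 with h | h
          · exact min_eq_left h
          · exfalso
            have h1 : β k = 1 := min_eq_right h.le
            rw [h1] at hk'
            exact lt_irrefl _ hk'
        rw [hmin]; ring
      obtain ⟨K, hK⟩ := eventually_atTop.1 hev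
      rw [← summable_nat_add_iff K]
      exact ((hs.comp_injective (add_left_injective K)).mul_left 2).congr
        (fun i => (hK (i + K) (Nat.le_add_left _ _)).symm)
    have hσtop : Tendsto (fun n => ∑ k ∈ Finset.range n, β k) atTop atTop := by
      by_contra h
      exact hβns ((summable_iff_not_tendsto_nat_atTop_of_nonneg hβ0).2 h)
    -- events and sums
    set Ak : ℕ → Set Ω := fun k => A k (b k / 2) with hAkdef
    have hAkm : ∀ k, MeasurableSet (Ak k) := fun k => hAm k _
    have hpair : ∀ k l, k ≠ l → μ (Ak k ∩ Ak l) = μ (Ak k) * μ (Ak l) := by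
      intro k l hkl
      have hdisj : Disjoint ({k} ×ˢ Finset.Icc 1 (a k)) ({l} ×ˢ Finset.Icc 1 (a l)) := by
        rw [Finset.disjoint_left]
        rintro p hp hq
        simp only [Finset.mem_product, Finset.mem_singleton] at hp hq
        exact hkl (hp.1 ▸ hq.1 ▸ rfl)
      have hmeasg : ∀ (S : Finset (ℕ × ℕ)), ∀ p ∈ S,
          MeasurableSet[MeasurableSpace.comap (L p.1 p.2) inferInstance]
            (L p.1 p.2 ⁻¹' Set.Ioi (b p.1 / 2)) :=
        fun S p _ => ⟨Set.Ioi (b p.1 / 2), measurableSet_Ioi, rfl⟩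
      have hpk : ∀ m : ℕ, ∏ p ∈ ({m} ×ˢ Finset.Icc 1 (a m)),
          μ (L p.1 p.2 ⁻¹' Set.Ioi (b p.1 / 2)) = μ (Ak m) := by
        intro m
        rw [← hindep.meas_biInter (hmeasg _)]
        congr 1
        have : (⋂ p ∈ ({m} ×ˢ Finset.Icc 1 (a m)), L p.1 p.2 ⁻¹' Set.Ioi (b p.1 / 2))
            = ⋂ p ∈ ({m} ×ˢ Finset.Icc 1 (a m)), L p.1 p.2 ⁻¹' Set.Ioi (b m / 2) := by
          apply Set.iInter₂_congr
          rintro p hp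
          simp only [Finset.mem_product, Finset.mem_singleton] at hp
          rw [hp.1]
        rw [this, hrowInter m (b m / 2), hAkdef]
      have hsplit : (⋂ p ∈ (({k} ×ˢ Finset.Icc 1 (a k)) ∪ ({l} ×ˢ Finset.Icc 1 (a l))),
          L p.1 p.2 ⁻¹' Set.Ioi (b p.1 / 2)) = Ak k ∩ Ak l := by
        have h1 : ∀ m : ℕ, (⋂ p ∈ ({m} ×ˢ Finset.Icc 1 (a m)),
            L p.1 p.2 ⁻¹' Set.Ioi (b p.1 / 2)) = Ak m := by
          intro m
          have : (⋂ p ∈ ({m} ×ˢ Finset.Icc 1 (a m)), L p.1 p.2 ⁻¹' Set.Ioi (b p.1 / 2))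
              = ⋂ p ∈ ({m} ×ˢ Finset.Icc 1 (a m)), L p.1 p.2 ⁻¹' Set.Ioi (b m / 2) := by
            apply Set.iInter₂_congr
            rintro p hp
            simp only [Finset.mem_product, Finset.mem_singleton] at hp
            rw [hp.1]
          rw [this, hrowInter m (b m / 2), hAkdef]
        rw [← h1 k, ← h1 l]
        ext ω
        simp only [Set.mem_iInter, Set.mem_inter_iff, Finset.mem_union]
        constructor
        · intro h
          exact ⟨fun p hp => h p (Or.inl hp), fun p hp => h p (Or.inr hp)⟩
        · rintro ⟨h1', h2'⟩ p (hp | hp)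
          · exact h1' p hp
          · exact h2' p hp
      rw [← hsplit, hindep.meas_biInter (hmeasg _), Finset.prod_union hdisj, hpk k, hpk l]
    -- quantitative lower bound
    have hquant : ∀ k, 2 ≤ a k → Real.exp (-2) * β k ≤ β k * (μ (Ak k)).toReal := by
      intro k hk2
      rcases eq_or_lt_of_le (hb0 k) with h0 | h0
      · have hβz : β k = 0 := by
          have hb : b k = 0 := h0.symm
          show min (b k / 2) 1 = 0
          rw [hb]
          norm_num
        rw [hβz]; simp
      · have hhalf : b k / 2 < b k := by linarith
        have hcdf_lt : cdf ν (b k / 2) < 1 / (a k : ℝ) := hlt k _ hhalf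
        have hak : (0:ℝ) < (a k : ℝ) := by exact_mod_cast hapos k
        have h12 : 1/(a k : ℝ) ≤ 1/2 :=
          one_div_le_one_div_of_le (by norm_num) (by exact_mod_cast hk2)
        have hl := hlow k (b k / 2) (cdf_nonneg ν _) (le_trans hcdf_lt.le h12)
        have hexp2 : Real.exp (-2) ≤ (μ (Ak k)).toReal := by
          refine le_trans (Real.exp_le_exp.2 ?_) hl
          have h1 : (a k : ℝ) * cdf ν (b k / 2) ≤ 1 := by
            calc (a k : ℝ) * cdf ν (b k / 2) ≤ (a k : ℝ) * (1/(a k : ℝ)) :=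
                  mul_le_mul_of_nonneg_left hcdf_lt.le hak.le
              _ = 1 := by field_simp
          linarith
        calc Real.exp (-2) * β k ≤ (μ (Ak k)).toReal * β k :=
              mul_le_mul_of_nonneg_right hexp2 (hβ0 k)
          _ = β k * (μ (Ak k)).toReal := mul_comm _ _
    set e : ℕ → ℝ := fun n => ∑ k ∈ Finset.Ico N n, β k * (μ (Ak k)).toReal with hedef
    have hetop : Tendsto e atTop atTop := by
      have hbase : Tendsto (fun n => Real.exp (-2) *
          ((∑ k ∈ Finset.range n, β k) - ∑ k ∈ Finset.range N, β k)) atTop atTop := by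
        apply Tendsto.const_mul_atTop (Real.exp_pos _)
        simpa [sub_eq_add_neg] using
          tendsto_atTop_add_const_right atTop (-(∑ k ∈ Finset.range N, β k)) hσtop
      apply tendsto_atTop_mono' atTop ?_ hbase
      filter_upwards [eventually_ge_atTop N] with n hn
      have h1 : ∑ k ∈ Finset.Ico N n, Real.exp (-2) * β k ≤ e n := by
        rw [hedef]
        exact Finset.sum_le_sum fun k hk => hquant k (hN2 k (Finset.mem_Ico.1 hk).1)
      calc Real.exp (-2) * ((∑ k ∈ Finset.range n, β k) - ∑ k ∈ Finset.range N, β k)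
          = ∑ k ∈ Finset.Ico N n, Real.exp (-2) * β k := by
            rw [← Finset.sum_Ico_eq_sub _ hn, Finset.mul_sum]
        _ ≤ e n := h1
    -- the partial sums of indicators
    set SS : ℕ → Ω → ℝ := fun n ω =>
      ∑ k ∈ Finset.Ico N n, β k * Set.indicator (Ak k) (fun _ => (1:ℝ)) ω with hSSdef
    have hSmeas : ∀ n, Measurable (SS n) := by
      intro n; rw [hSSdef]
      exact Finset.measurable_sum _ fun k _ =>
        (measurable_const.indicator (hAkm k)).const_mul _
    have hXint : ∀ k, Integrable (fun ω => β k * Set.indicator (Ak k) (fun _ => (1:ℝ)) ω) μ :=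
      fun k => ((integrable_const (1:ℝ)).indicator (hAkm k)).const_mul _
    have hSint : ∀ n, Integrable (SS n) μ := by
      intro n; rw [hSSdef]
      exact integrable_finset_sum _ fun k _ => hXint k
    have hES : ∀ n, ∫ ω, SS n ω ∂μ = e n := by
      intro n
      rw [hSSdef, hedef]
      rw [integral_finset_sum _ fun k _ => hXint k]
      refine Finset.sum_congr rfl fun k _ => ?_
      rw [integral_const_mul, integral_indicator_const (1:ℝ) (hAkm k), smul_eq_mul, mul_one, measureReal_def]
    have hμint : ∀ k l : ℕ, Integrable (fun ω =>
        (β k * β l) * Set.indicator (Ak k ∩ Ak l) (fun _ => (1:ℝ)) ω) μ :=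
      fun k l => ((integrable_const (1:ℝ)).indicator ((hAkm k).inter (hAkm l))).const_mul _
    have hSsq : ∀ n ω, (SS n ω)^2 = ∑ k ∈ Finset.Ico N n, ∑ l ∈ Finset.Ico N n,
        (β k * β l) * Set.indicator (Ak k ∩ Ak l) (fun _ => (1:ℝ)) ω := by
      intro n ω
      rw [hSSdef]
      rw [sq, Finset.sum_mul_sum]
      refine Finset.sum_congr rfl fun k _ => Finset.sum_congr rfl fun l _ => ?_
      have hmul := Set.inter_indicator_mul (s := Ak k) (t := Ak l)
        (fun _ => (1:ℝ)) (fun _ => (1:ℝ)) ω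
      simp only [mul_one] at hmul
      calc (β k * Set.indicator (Ak k) (fun _ => (1:ℝ)) ω) *
            (β l * Set.indicator (Ak l) (fun _ => (1:ℝ)) ω)
          = (β k * β l) * (Set.indicator (Ak k) (fun _ => (1:ℝ)) ω *
            Set.indicator (Ak l) (fun _ => (1:ℝ)) ω) := by ring
        _ = (β k * β l) * Set.indicator (Ak k ∩ Ak l) (fun _ => (1:ℝ)) ω := by
            rw [← hmul]
    have hS2int : ∀ n, Integrable (fun ω => (SS n ω)^2) μ := by
      intro n
      have : (fun ω => (SS n ω)^2) = fun ω => ∑ k ∈ Finset.Ico N n, ∑ l ∈ Finset.Ico N n,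
          (β k * β l) * Set.indicator (Ak k ∩ Ak l) (fun _ => (1:ℝ)) ω :=
        funext (hSsq n)
      rw [this]
      exact integrable_finset_sum _ fun k _ => integrable_finset_sum _ fun l _ => hμint k l
    have hS2 : ∀ n, ∫ ω, (SS n ω)^2 ∂μ = ∑ k ∈ Finset.Ico N n, ∑ l ∈ Finset.Ico N n,
        (β k * β l) * (μ (Ak k ∩ Ak l)).toReal := by
      intro n
      simp_rw [hSsq n]
      rw [integral_finset_sum _ fun k _ => integrable_finset_sum _ fun l _ => hμint k l]
      refine Finset.sum_congr rfl fun k _ => ?_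
      rw [integral_finset_sum _ fun l _ => hμint k l]
      refine Finset.sum_congr rfl fun l _ => ?_
      rw [integral_const_mul, integral_indicator_const (1:ℝ) ((hAkm k).inter (hAkm l)),
        smul_eq_mul, mul_one, measureReal_def]
    have hptoR : ∀ k, (μ (Ak k)).toReal ≤ 1 := by
      intro k
      have := ENNReal.toReal_mono ENNReal.one_ne_top (prob_le_one (μ := μ) (s := Ak k))
      simpa using this
    have hdiff : ∀ n, (∫ ω, (SS n ω)^2 ∂μ) - (e n)^2 ≤ e n := by
      intro n
      rw [hS2 n]
      have he2 : (e n)^2 = ∑ k ∈ Finset.Ico N n, ∑ l ∈ Finset.Ico N n,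
          (β k * (μ (Ak k)).toReal) * (β l * (μ (Ak l)).toReal) := by
        rw [hedef, sq, Finset.sum_mul_sum]
      rw [he2, ← Finset.sum_sub_distrib]
      have hterm : ∀ k ∈ Finset.Ico N n,
          (∑ l ∈ Finset.Ico N n, (β k * β l) * (μ (Ak k ∩ Ak l)).toReal) -
          (∑ l ∈ Finset.Ico N n, (β k * (μ (Ak k)).toReal) * (β l * (μ (Ak l)).toReal))
          ≤ β k * (μ (Ak k)).toReal := by
        intro k hk
        rw [← Finset.sum_sub_distrib]
        have hzero : ∀ l ∈ Finset.Ico N n, l ≠ k →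
            (β k * β l) * (μ (Ak k ∩ Ak l)).toReal -
            (β k * (μ (Ak k)).toReal) * (β l * (μ (Ak l)).toReal) = 0 := by
          intro l _ hlk
          rw [hpair k l (Ne.symm hlk), ENNReal.toReal_mul]
          ring
        rw [Finset.sum_eq_single_of_mem k hk hzero, Set.inter_self]
        have e1 : β k * β k ≤ β k := by nlinarith [hβ0 k, hβ1 k]
        have e2 : β k * β k * (μ (Ak k)).toReal ≤ β k * (μ (Ak k)).toReal :=
          mul_le_mul_of_nonneg_right e1 ENNReal.toReal_nonneg
        have e3 : (0:ℝ) ≤ β k * (μ (Ak k)).toReal * (β k * (μ (Ak k)).toReal) :=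
          mul_nonneg (mul_nonneg (hβ0 k) ENNReal.toReal_nonneg)
            (mul_nonneg (hβ0 k) ENNReal.toReal_nonneg)
        linarith [e2, e3]
      calc ∑ k ∈ Finset.Ico N n, ((∑ l ∈ Finset.Ico N n, (β k * β l) *
            (μ (Ak k ∩ Ak l)).toReal) - ∑ l ∈ Finset.Ico N n,
            (β k * (μ (Ak k)).toReal) * (β l * (μ (Ak l)).toReal))
          ≤ ∑ k ∈ Finset.Ico N n, β k * (μ (Ak k)).toReal := Finset.sum_le_sum hterm
        _ = e n := by rw [hedef]
    have hVar : ∀ n, ∫ ω, (SS n ω - e n)^2 ∂μ ≤ e n := by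
      intro n
      have hf1 : Integrable (fun ω => (SS n ω)^2 - (2 * e n) * SS n ω) μ :=
        (hS2int n).sub ((hSint n).const_mul _)
      have hf3 : Integrable (fun ω => (2 * e n) * SS n ω) μ := (hSint n).const_mul _
      calc ∫ ω, (SS n ω - e n)^2 ∂μ
          = ∫ ω, ((SS n ω)^2 - (2 * e n) * SS n ω + (e n)^2) ∂μ := by
            apply integral_congr_ae
            filter_upwards with ω
            ring
        _ = (∫ ω, ((SS n ω)^2 - (2 * e n) * SS n ω) ∂μ) + (e n)^2 := by
            rw [integral_add hf1 (integrable_const _), integral_const]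
            simp [measure_univ]
        _ = (∫ ω, (SS n ω)^2 ∂μ) - (2 * e n) * (∫ ω, SS n ω ∂μ) + (e n)^2 := by
            rw [integral_sub (hS2int n) hf3, integral_const_mul]
        _ = (∫ ω, (SS n ω)^2 ∂μ) - (e n)^2 := by rw [hES n]; ring
        _ ≤ e n := by linarith [hdiff n]
    have hcheb : ∀ n, 0 < e n → (μ {ω | SS n ω ≤ e n / 2}).toReal ≤ 4 / e n := by
      intro n hen
      have hsm : MeasurableSet {ω | SS n ω ≤ e n / 2} :=
        measurableSet_le (hSmeas n) measurable_const
      have hVint : Integrable (fun ω => (SS n ω - e n)^2) μ := by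
        have hf1 : Integrable (fun ω => ((SS n ω)^2 - (2 * e n) * SS n ω) + (e n)^2) μ :=
          ((hS2int n).sub ((hSint n).const_mul _)).add (integrable_const _)
        exact hf1.congr (Filter.Eventually.of_forall fun ω => by ring)
      have h1 : (e n/2)^2 * (μ {ω | SS n ω ≤ e n / 2}).toReal ≤
          ∫ ω in {ω | SS n ω ≤ e n / 2}, (SS n ω - e n)^2 ∂μ := by
        apply setIntegral_ge_of_const_le_real hsm (measure_ne_top μ _) ?_ hVint.integrableOn
        intro x hx
        have hx' : SS n x ≤ e n / 2 := hx
        have h2 : e n / 2 ≤ e n - SS n x := by linarith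
        calc (e n/2)^2 ≤ (e n - SS n x)^2 := pow_le_pow_left₀ (by positivity) h2 2
          _ = (SS n x - e n)^2 := by ring
      have h2 : ∫ ω in {ω | SS n ω ≤ e n / 2}, (SS n ω - e n)^2 ∂μ ≤
          ∫ ω, (SS n ω - e n)^2 ∂μ :=
        setIntegral_le_integral hVint (Eventually.of_forall fun ω => sq_nonneg _)
      have h3 := le_trans h1 (le_trans h2 (hVar n))
      rw [le_div_iff₀ hen]
      nlinarith [ENNReal.toReal_nonneg (a := μ {ω | SS n ω ≤ e n / 2}), h3, hen]
    -- conclusion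
    set T : ℕ → Set Ω := fun R => ⋂ n, {ω | SS n ω ≤ (R:ℝ)} with hTdef
    have hT0 : ∀ R : ℕ, μ (T R) = 0 := by
      intro R
      have hev : ∀ᶠ n in atTop, (μ (T R)).toReal ≤ 4 / e n := by
        filter_upwards [hetop.eventually_ge_atTop (2*(R:ℝ)), hetop.eventually_gt_atTop 0]
          with n h1 h2
        have hsub : T R ⊆ {ω | SS n ω ≤ e n / 2} := by
          intro ω hω
          have := Set.mem_iInter.1 hω n
          simp only [Set.mem_setOf_eq] at this ⊢
          linarith
        calc (μ (T R)).toReal ≤ (μ {ω | SS n ω ≤ e n / 2}).toReal :=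
              ENNReal.toReal_mono (measure_ne_top μ _) (measure_mono hsub)
          _ ≤ 4 / e n := hcheb n h2
      have hlim : Tendsto (fun n => 4 / e n) atTop (nhds 0) :=
        Tendsto.div_atTop tendsto_const_nhds hetop
      have h0 : (μ (T R)).toReal = 0 :=
        le_antisymm (ge_of_tendsto hlim hev) ENNReal.toReal_nonneg
      rcases (ENNReal.toReal_eq_zero_iff _).1 h0 with h | h
      · exact h
      · exact absurd h (measure_ne_top μ _)
    set Good : Set Ω := {ω | Summable (fun k : ℕ =>
        (Finset.Icc 1 (a k)).inf' (Finset.nonempty_Icc.mpr (hapos k))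
          (fun j => L k j ω))} with hGood
    have hsubBad : Good ⊆ ⋃ R : ℕ, T R := by
      intro ω hω
      have hω' : Summable (fun k : ℕ =>
          (Finset.Icc 1 (a k)).inf' (Finset.nonempty_Icc.mpr (hapos k))
            (fun j => L k j ω)) := hω
      refine Set.mem_iUnion.2 ⟨⌈∑' k : ℕ, (Finset.Icc 1 (a k)).inf'
        (Finset.nonempty_Icc.mpr (hapos k)) (fun j => L k j ω)⌉₊,
        Set.mem_iInter.2 fun n => ?_⟩
      simp only [Set.mem_setOf_eq]
      calc SS n ω ≤ ∑ k ∈ Finset.Ico N n, (Finset.Icc 1 (a k)).inf'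
            (Finset.nonempty_Icc.mpr (hapos k)) (fun j => L k j ω) := by
            rw [hSSdef]
            refine Finset.sum_le_sum fun k _ => ?_
            by_cases hm : ω ∈ Ak k
            · rw [Set.indicator_of_mem hm, mul_one]
              have hlt' := (hAiff k (b k / 2) ω).1 hm
              linarith [hβb k]
            · rw [Set.indicator_of_notMem hm, mul_zero]
              exact hMnn k ω
        _ ≤ ∑' k : ℕ, (Finset.Icc 1 (a k)).inf'
            (Finset.nonempty_Icc.mpr (hapos k)) (fun j => L k j ω) :=
            Summable.sum_le_tsum _ (fun k _ => hMnn k ω) hω'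
        _ ≤ (⌈∑' k : ℕ, (Finset.Icc 1 (a k)).inf'
            (Finset.nonempty_Icc.mpr (hapos k)) (fun j => L k j ω)⌉₊ : ℝ) := Nat.le_ceil _
    have h1 : μ Good = 0 := measure_mono_null hsubBad (measure_iUnion_null hT0)
    have h2 : μ Goodᶜ = 0 := by
      rw [hGood, Set.compl_setOf]
      exact ae_iff.1 hAE
    have hcontr : (1 : ENNReal) = 0 := by
      have hle := measure_union_le (μ := μ) Good Goodᶜ
      rw [Set.union_compl_self, measure_univ, h1, h2, add_zero] at hle
      exact le_antisymm hle zero_le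
    exact one_ne_zero hcontr
  · -- Summable b → a.s. summable
    intro hsum
    set mk : ℕ → ℕ := fun k => N + (k - N) / 2 with hmkdef
    have hbound : ∀ k, N ≤ k →
        μ (A k (b (mk k))) ≤ ENNReal.ofReal (Real.exp (-(c ^ ((k - N)/2)))) := by
      intro k hk
      have h1 : N ≤ mk k := by show N ≤ N + (k - N)/2; omega
      have h2 : mk k ≤ k := by show N + (k - N)/2 ≤ k; omega
      have h3 : (k - N)/2 ≤ k - mk k := by show (k - N)/2 ≤ k - (N + (k - N)/2); omega
      have hFmk : 1/(a (mk k) : ℝ) ≤ cdf ν (b (mk k)) := hFb (mk k) (hN2 _ h1)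
      have hgw := hgpow (mk k) h1 k h2
      have hamkpos : (0:ℝ) < (a (mk k) : ℝ) := by exact_mod_cast hapos _
      have hkey : c ^ ((k - N)/2) ≤ (a k : ℝ) * cdf ν (b (mk k)) := by
        have e1 : c ^ ((k - N)/2) ≤ c ^ (k - mk k) := pow_le_pow_right₀ (le_of_lt hc) h3
        have e3 : c ^ (k - mk k) ≤ (a k : ℝ) / (a (mk k) : ℝ) := by
          rw [le_div_iff₀ hamkpos]
          calc c ^ (k - mk k) * (a (mk k) : ℝ) = (a (mk k) : ℝ) * c ^ (k - mk k) :=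
                mul_comm _ _
            _ ≤ (a k : ℝ) := hgw
        calc c ^ ((k - N)/2) ≤ (a k : ℝ) / (a (mk k) : ℝ) := le_trans e1 e3
          _ = (a k : ℝ) * (1/(a (mk k) : ℝ)) := by ring
          _ ≤ (a k : ℝ) * cdf ν (b (mk k)) :=
              mul_le_mul_of_nonneg_left hFmk (Nat.cast_nonneg _)
      rw [ENNReal.le_ofReal_iff_toReal_le (measure_ne_top μ _) (Real.exp_nonneg _)]
      calc (μ (A k (b (mk k)))).toReal
          ≤ Real.exp (-((a k : ℝ) * cdf ν (b (mk k)))) := hup k _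
        _ ≤ Real.exp (-(c ^ ((k - N)/2))) := Real.exp_le_exp.2 (by linarith)
    -- summability of the exponential bound
    have hrlt : Real.exp (-(c-1)) < 1 := Real.exp_lt_one_iff.2 (by linarith)
    have hgeo : Summable (fun j : ℕ => Real.exp (-1) * Real.exp (-(c-1)) ^ j) :=
      (summable_geometric_of_lt_one (Real.exp_nonneg _) hrlt).mul_left _
    have hf : Summable (fun n : ℕ => Real.exp (-(c ^ (n - N)))) := by
      have hgeo' : Summable (fun n : ℕ => Real.exp (-1) * Real.exp (-(c-1)) ^ (n - N)) := by
        rw [← summable_nat_add_iff N]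
        exact hgeo.congr (fun i => by rw [Nat.add_sub_cancel])
      apply Summable.of_nonneg_of_le (fun n => Real.exp_nonneg _) ?_ hgeo'
      intro n
      have hb1 : 1 + (n - N : ℕ) * (c - 1) ≤ c ^ (n - N) := by
        have := one_add_mul_le_pow (by linarith : (-2:ℝ) ≤ c - 1) (n - N)
        have h' : (1 + (c - 1)) = c := by ring
        rw [h'] at this
        exact this
      calc Real.exp (-(c ^ (n - N)))
          ≤ Real.exp (-(1 + (n - N : ℕ) * (c - 1))) := Real.exp_le_exp.2 (by linarith)
        _ = Real.exp (-1) * Real.exp (-(c-1)) ^ (n - N) := by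
            rw [← Real.exp_nat_mul, ← Real.exp_add]; congr 1; ring
    have hgsum : Summable (fun k : ℕ => Real.exp (-(c ^ ((k - N)/2)))) := by
      have := aux_summable_half (f := fun n => Real.exp (-(c ^ (n - N))))
        (fun n => Real.exp_nonneg _) hf N
      exact this.congr (fun k => by rw [Nat.add_sub_cancel_left])
    set Ev : ℕ → Set Ω := fun k => if N ≤ k then A k (b (mk k)) else ∅ with hEvdef
    have htsum : ∑' k, μ (Ev k) ≠ ⊤ := by
      have hle : ∀ k, μ (Ev k) ≤ ENNReal.ofReal (Real.exp (-(c ^ ((k - N)/2)))) := by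
        intro k
        rw [hEvdef]
        by_cases hk : N ≤ k
        · simp only [if_pos hk]; exact hbound k hk
        · simp only [if_neg hk]; simp
      refine ne_top_of_le_ne_top ?_ (ENNReal.tsum_le_tsum hle)
      rw [← ENNReal.ofReal_tsum_of_nonneg (fun k => Real.exp_nonneg _) hgsum]
      exact ENNReal.ofReal_ne_top
    have hbm : Summable (fun k => b (mk k)) := aux_summable_half hb0 hsum N
    filter_upwards [MeasureTheory.ae_eventually_notMem htsum] with ω hω
    obtain ⟨K, hK⟩ := eventually_atTop.1 hω
    set K' := max K N with hK'def
    have hMle : ∀ i : ℕ, (Finset.Icc 1 (a (i + K'))).inf'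
        (Finset.nonempty_Icc.mpr (hapos (i + K'))) (fun j => L (i + K') j ω)
        ≤ b (mk (i + K')) := by
      intro i
      have hik : N ≤ i + K' := le_trans (le_max_right _ _) (Nat.le_add_left _ _)
      have hiK : K ≤ i + K' := le_trans (le_max_left _ _) (Nat.le_add_left _ _)
      have hnm := hK (i + K') hiK
      rw [hEvdef] at hnm
      simp only [if_pos hik] at hnm
      exact le_of_not_gt (fun hlt' => hnm ((hAiff _ _ ω).2 hlt'))
    rw [← summable_nat_add_iff K']
    exact Summable.of_nonneg_of_le (fun i => hMnn _ ω) hMle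
      (hbm.comp_injective (add_left_injective K'))
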